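/- For real u > κ := (1/2)·arccosh(3/2), exp(dS/du) = (cosh(4u) − cosh(2u) − 1 + sinh(2u)·√((2·cosh(2u)+1)(2·cosh(2u)−3)))², where S(u) := Li₂(e^{−φ(u)−2u}) − Li₂(e^{φ(u)−2u}) + 2u·φ(u) and φ(u) := arccosh(cosh(2u) − 1/2). -/

import Mathlib

set_option maxHeartbeats 1000000


noncomputable def arcosh (x : ℝ) : ℝ := Real.log (x + Real.sqrt (x^2 - 1))

noncomputable def kappa : ℝ := arcosh (3/2) / 2

noncomputable def phi (ξ : ℝ) : ℝ := arcosh (Real.cosh (2*ξ) - 1/2)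

noncomputable def Li2 (z : ℝ) : ℝ := ∑' n : ℕ, z^n / (n:ℝ)^2

noncomputable def Sfun (u : ℝ) : ℝ :=
  Li2 (Real.exp (-phi u - 2*u)) - Li2 (Real.exp (phi u - 2*u)) + 2*u*(phi u)

open Real

lemma cosh_arcosh' {y : ℝ} (hy : 1 ≤ y) : Real.cosh (_root_.arcosh y) = y := by
  have h0 : (0:ℝ) ≤ y^2 - 1 := by nlinarith
  have hsq : Real.sqrt (y^2-1) ^ 2 = y^2 - 1 := Real.sq_sqrt h0
  have hsn : 0 ≤ Real.sqrt (y^2-1) := Real.sqrt_nonneg _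
  have hw : 0 < y + Real.sqrt (y^2-1) := by linarith
  have hexp : Real.exp (_root_.arcosh y) = y + Real.sqrt (y^2-1) := Real.exp_log hw
  have hinv : (y + Real.sqrt (y^2-1))⁻¹ = y - Real.sqrt (y^2-1) :=
    inv_eq_of_mul_eq_one_right (by nlinarith)
  rw [Real.cosh_eq, hexp, Real.exp_neg, hexp, hinv]
  ring

lemma li2_hasDerivAt {z : ℝ} (h0 : 0 < z) (h1 : z < 1) :
    HasDerivAt Li2 (-Real.log (1 - z) / z) z := by
  set r : ℝ := (1 + z) / 2 with hr
  have hr0 : 0 < r := by rw [hr]; linarith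
  have hr1 : r < 1 := by rw [hr]; linarith
  have hzr : z < r := by rw [hr]; linarith
  have key : HasDerivAt (fun y : ℝ => ∑' n : ℕ, y ^ n / (n:ℝ)^2)
      (∑' n : ℕ, ((n:ℝ) * z ^ (n - 1)) / (n:ℝ)^2) z := by
    apply hasDerivAt_tsum_of_isPreconnected
      (u := fun n : ℕ => r ^ n / r)
      (t := Metric.ball (0:ℝ) r)
      (g := fun (n : ℕ) (y : ℝ) => y ^ n / (n:ℝ)^2)
      (g' := fun (n : ℕ) (y : ℝ) => ((n:ℝ) * y ^ (n - 1)) / (n:ℝ)^2)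
      (y₀ := 0)
    · exact (summable_geometric_of_lt_one hr0.le hr1).div_const r
    · exact Metric.isOpen_ball
    · exact (convex_ball (0:ℝ) r).isPreconnected
    · intro n y _
      exact (hasDerivAt_pow n y).div_const _
    · intro n y hy
      simp only [Metric.mem_ball, dist_zero_right, Real.norm_eq_abs] at hy
      rcases Nat.eq_zero_or_pos n with h | h
      · subst h; simp; positivity
      · have h1n : (1:ℝ) ≤ (n:ℝ) := by exact_mod_cast h
        have e2 : r ^ n / r = r ^ (n-1) := by
          rw [div_eq_iff hr0.ne', ← pow_succ]
          congr 1
          omega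
        simp only [Real.norm_eq_abs, abs_div, abs_mul, abs_pow, Nat.abs_cast]
        rw [e2]
        have e1 : |y| ^ (n-1) ≤ r ^ (n-1) := pow_le_pow_left₀ (abs_nonneg y) hy.le _
        have hpow : (0:ℝ) ≤ r ^ (n-1) := by positivity
        rw [div_le_iff₀ (by positivity : (0:ℝ) < (n:ℝ)^2)]
        have hnn : (n:ℝ) ≤ (n:ℝ)^2 := by nlinarith
        calc (n:ℝ) * |y| ^ (n-1) ≤ (n:ℝ) * r ^ (n-1) :=
              mul_le_mul_of_nonneg_left e1 (by positivity)
          _ ≤ (n:ℝ)^2 * r ^ (n-1) := mul_le_mul_of_nonneg_right hnn hpow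
          _ = r ^ (n-1) * (n:ℝ)^2 := mul_comm _ _
    · exact Metric.mem_ball_self hr0
    · apply summable_zero.congr
      intro n
      rcases n with _ | n
      · norm_num
      · rw [zero_pow (Nat.succ_ne_zero n), zero_div]
    · simp only [Metric.mem_ball, dist_zero_right, Real.norm_eq_abs]
      rw [abs_of_pos h0]; exact hzr
  have hz1 : |z| < 1 := by rw [abs_of_pos h0]; exact h1
  have H := (hasSum_pow_div_log_of_abs_lt_one hz1).div_const z
  have hfun : (fun n : ℕ => z ^ (n+1) / ((n:ℝ)+1) / z)
      = (fun n : ℕ => (((n+1:ℕ):ℝ) * z ^ ((n+1) - 1)) / ((n+1:ℕ):ℝ)^2) := by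
    funext n
    have hn1 : ((n:ℝ)+1) ≠ 0 := by positivity
    simp only [Nat.add_sub_cancel]
    push_cast
    field_simp
    ring
  rw [hfun] at H
  have H2 := (hasSum_nat_add_iff (f := fun n : ℕ => ((n:ℝ) * z ^ (n - 1)) / (n:ℝ)^2) 1).mp H
  simp only [Finset.range_one, Finset.sum_singleton, Nat.cast_zero] at H2
  norm_num at H2
  have htsum : (∑' n : ℕ, ((n:ℝ) * z ^ (n - 1)) / (n:ℝ)^2) = -Real.log (1-z) / z :=
    H2.tsum_eq
  rw [htsum] at key
  exact key

lemma phi_hasDerivAt {u : ℝ} (hx : 1 < Real.cosh (2*u) - 1/2) :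
    HasDerivAt phi
      (2 * Real.sinh (2*u) / Real.sqrt ((Real.cosh (2*u) - 1/2)^2 - 1)) u := by
  set c := Real.cosh (2*u) with hc
  set σ := Real.sinh (2*u) with hσ
  set x := c - 1/2 with hxd
  set s := Real.sqrt (x^2 - 1) with hsd
  have hx2 : (0:ℝ) < x^2 - 1 := by nlinarith
  have hs0 : 0 < s := Real.sqrt_pos.2 hx2
  have hs2 : s^2 = x^2 - 1 := Real.sq_sqrt hx2.le
  have hlin : HasDerivAt (fun ξ : ℝ => 2*ξ) 2 u := by
    simpa using (hasDerivAt_id u).const_mul 2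
  have hcosh : HasDerivAt (fun ξ : ℝ => Real.cosh (2*ξ)) (σ * 2) u :=
    (Real.hasDerivAt_cosh (2*u)).comp u hlin
  have hxf : HasDerivAt (fun ξ : ℝ => Real.cosh (2*ξ) - 1/2) (σ * 2) u :=
    hcosh.sub_const _
  have hq : HasDerivAt (fun ξ : ℝ => (Real.cosh (2*ξ) - 1/2)^2 - 1)
      ((2:ℝ) * x ^ (2-1) * (σ * 2)) u := (hxf.pow 2).sub_const 1
  have hne : (Real.cosh (2*u) - 1/2)^2 - 1 ≠ 0 := by
    have hfold : Real.cosh (2*u) - 1/2 = x := rfl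
    rw [hfold]; nlinarith
  have hsq : HasDerivAt (fun ξ : ℝ => Real.sqrt ((Real.cosh (2*ξ) - 1/2)^2 - 1))
      ((2:ℝ) * x ^ (2-1) * (σ * 2) / (2 * Real.sqrt ((Real.cosh (2*u) - 1/2)^2 - 1))) u :=
    hq.sqrt hne
  have hins : HasDerivAt
      (fun ξ : ℝ => (Real.cosh (2*ξ) - 1/2) + Real.sqrt ((Real.cosh (2*ξ) - 1/2)^2 - 1))
      (σ * 2 + (2:ℝ) * x ^ (2-1) * (σ * 2) / (2 * Real.sqrt ((Real.cosh (2*u) - 1/2)^2 - 1))) u :=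
    hxf.add hsq
  have hxs0 : Real.cosh (2*u) - 1/2 + Real.sqrt ((Real.cosh (2*u) - 1/2)^2 - 1) ≠ 0 := by
    have hfold : Real.cosh (2*u) - 1/2 = x := rfl
    have hfold2 : Real.sqrt ((Real.cosh (2*u) - 1/2)^2 - 1) = s := rfl
    rw [hfold, hfold2]; positivity
  have hlog := hins.log hxs0
  have heq : phi = fun ξ : ℝ =>
      Real.log ((Real.cosh (2*ξ) - 1/2) + Real.sqrt ((Real.cosh (2*ξ) - 1/2)^2 - 1)) := rfl
  rw [heq]
  convert hlog using 1
  have hfold : Real.cosh (2*u) - 1/2 = x := rfl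
  have hfold2 : Real.sqrt ((Real.cosh (2*u) - 1/2)^2 - 1) = s := rfl
  rw [hfold, hfold2]
  rw [div_eq_div_iff hs0.ne' (by positivity : x + s ≠ 0)]
  field_simp
  simp only [show (2:ℕ) - 1 = 1 from rfl, pow_one]
  nlinarith [hs2]

theorem stmt19 (u : ℝ) (hu : kappa < u) :
    Real.exp (deriv Sfun u) =
      (Real.cosh (4*u) - Real.cosh (2*u) - 1 +
        Real.sinh (2*u) * Real.sqrt ((2*Real.cosh (2*u)+1) * (2*Real.cosh (2*u)-3)))^2 := by
  have hk0 : 0 < _root_.arcosh (3/2) := by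
    have h5 : (0:ℝ) ≤ Real.sqrt ((3/2:ℝ)^2 - 1) := Real.sqrt_nonneg _
    exact Real.log_pos (by linarith)
  have hu0 : 0 < u := lt_trans (by unfold kappa; linarith) hu
  set c := Real.cosh (2*u) with hc
  set σ := Real.sinh (2*u) with hσd
  have hσ0 : 0 < σ := by
    rw [hσd]; exact (Real.sinh_pos_iff).2 (by linarith)
  have hσ2 : σ^2 = c^2 - 1 := by rw [hσd, hc, Real.sinh_sq]
  have hc32 : 3/2 < c := by
    have h1 : Real.cosh (2*kappa) = 3/2 := by
      rw [show 2*kappa = _root_.arcosh (3/2) by unfold kappa; ring]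
      exact cosh_arcosh' (by norm_num)
    calc (3/2:ℝ) = Real.cosh (2*kappa) := h1.symm
      _ < c := by
          rw [hc]
          apply Real.cosh_lt_cosh.2
          rw [abs_of_pos (by unfold kappa; linarith), abs_of_pos (by linarith)]
          linarith
  set x := c - 1/2 with hxd
  have hx1 : 1 < x := by rw [hxd]; linarith
  set s := Real.sqrt (x^2 - 1) with hsd
  have hx2 : (0:ℝ) < x^2 - 1 := by nlinarith
  have hs2 : s^2 = x^2 - 1 := Real.sq_sqrt hx2.le
  have hs0 : 0 < s := Real.sqrt_pos.2 hx2
  have hs2c : s^2 = c^2 - c - 3/4 := by rw [hs2, hxd]; ring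
  have hsσ : s < σ := by nlinarith [hs2c, hσ2, hc32, hs0, hσ0]
  have hxs1 : 1 < x + s := by linarith
  have hexp_phi : Real.exp (phi u) = x + s := by
    rw [show phi u = Real.log (x + s) from rfl]
    exact Real.exp_log (by linarith)
  have hexp_negphi : Real.exp (-phi u) = x - s := by
    rw [Real.exp_neg, hexp_phi]
    exact inv_eq_of_mul_eq_one_right (by nlinarith)
  set a := Real.exp (-(2*u)) with had
  have ha : a = c - σ := (Real.cosh_sub_sinh (2*u)).symm
  have ha0 : 0 < a := Real.exp_pos _
  set A := Real.exp (-phi u - 2*u) with hAd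
  set B := Real.exp (phi u - 2*u) with hBd
  have hA : A = (x - s) * a := by
    rw [hAd, show -phi u - 2*u = -phi u + -(2*u) by ring, Real.exp_add, hexp_negphi, had]
  have hB : B = (x + s) * a := by
    rw [hBd, show phi u - 2*u = phi u + -(2*u) by ring, Real.exp_add, hexp_phi, had]
  have hA0 : 0 < A := Real.exp_pos _
  have hB0 : 0 < B := Real.exp_pos _
  have hcσ : 0 < c - σ := ha ▸ ha0
  have hB1 : B < 1 := by
    rw [hB, ha]
    nlinarith [mul_pos hcσ (show (0:ℝ) < σ - s + 1/2 by linarith)]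
  have hA1 : A < 1 := by
    have : A < B := by rw [hA, hB]; nlinarith
    linarith
  -- derivative of phi
  have hp : HasDerivAt phi (2*σ/s) u := by
    have := phi_hasDerivAt (u := u) (by rw [← hc, ← hxd]; exact hx1)
    simpa only [← hc, ← hσd, ← hxd, ← hsd] using this
  have hlin : HasDerivAt (fun ξ : ℝ => 2*ξ) 2 u := by
    simpa using (hasDerivAt_id u).const_mul 2
  have hg1 : HasDerivAt (fun ξ : ℝ => -phi ξ - 2*ξ) (-(2*σ/s) - 2) u :=
    hp.neg.sub hlin
  have hg2 : HasDerivAt (fun ξ : ℝ => phi ξ - 2*ξ) ((2*σ/s) - 2) u :=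
    hp.sub hlin
  have hA' : HasDerivAt (fun ξ : ℝ => Real.exp (-phi ξ - 2*ξ)) (A * (-(2*σ/s) - 2)) u :=
    (Real.hasDerivAt_exp _).comp u hg1
  have hB' : HasDerivAt (fun ξ : ℝ => Real.exp (phi ξ - 2*ξ)) (B * ((2*σ/s) - 2)) u :=
    (Real.hasDerivAt_exp _).comp u hg2
  have hLiA : HasDerivAt (fun ξ : ℝ => Li2 (Real.exp (-phi ξ - 2*ξ)))
      ((-Real.log (1-A)/A) * (A * (-(2*σ/s) - 2))) u :=
    by have := (li2_hasDerivAt hA0 hA1).comp u hA'; exact this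
  have hLiB : HasDerivAt (fun ξ : ℝ => Li2 (Real.exp (phi ξ - 2*ξ)))
      ((-Real.log (1-B)/B) * (B * ((2*σ/s) - 2))) u :=
    by have := (li2_hasDerivAt hB0 hB1).comp u hB'; exact this
  have hlast : HasDerivAt (fun ξ : ℝ => 2*ξ*(phi ξ)) (2 * phi u + (2*u) * (2*σ/s)) u :=
    hlin.mul hp
  have hS : HasDerivAt Sfun
      (((-Real.log (1-A)/A) * (A * (-(2*σ/s) - 2))
        - (-Real.log (1-B)/B) * (B * ((2*σ/s) - 2)))
        + (2 * phi u + (2*u) * (2*σ/s))) u := (hLiA.sub hLiB).add hlast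
  rw [hS.deriv]
  set L₁ := Real.log (1-A) with hL1
  set L₂ := Real.log (1-B) with hL2
  have hsum_logs : L₁ + L₂ = -(2*u) := by
    rw [hL1, hL2, ← Real.log_mul (by linarith) (by linarith)]
    have hprod : (1-A)*(1-B) = a := by
      have hs2c : s^2 = (c-1/2)^2 - 1 := by rw [← hxd]; exact hs2
      rw [hA, hB, ha, hxd]
      linear_combination (-c^2 + 2*σ*c - σ^2) * hs2c + hσ2
    rw [hprod, had, Real.log_exp]
  have hD : ((-L₁/A) * (A * (-(2*σ/s) - 2)) - (-L₂/B) * (B * ((2*σ/s) - 2)))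
      + (2 * phi u + (2*u) * (2*σ/s)) = 2 * (L₁ - L₂ + phi u) := by
    have cancel : ∀ (L t X : ℝ), X ≠ 0 → (-L/X)*(X*t) = -L*t := by
      intro L t X hX; field_simp
    rw [cancel _ _ _ hA0.ne', cancel _ _ _ hB0.ne']
    have hps : (2*σ/s) * s = 2*σ := by field_simp
    linear_combination ((2*σ/s)) * hsum_logs
  rw [hD, show (2:ℝ) * (L₁ - L₂ + phi u) = (L₁ - L₂ + phi u) + (L₁ - L₂ + phi u) by ring,
    Real.exp_add, ← sq]
  have hbase : Real.exp (L₁ - L₂ + phi u) = (1-A)*(x+s)/(1-B) := by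
    rw [show L₁ - L₂ + phi u = L₁ + phi u - L₂ by ring, Real.exp_sub, Real.exp_add,
      hL1, hL2, Real.exp_log (by linarith), Real.exp_log (by linarith), hexp_phi]
  have h4u : Real.cosh (4*u) = 2*c^2 - 1 := by
    have : Real.cosh (4*u) = Real.cosh (2*u)^2 + Real.sinh (2*u)^2 := by
      rw [show (4:ℝ)*u = 2*(2*u) by ring]; exact Real.cosh_two_mul _
    rw [this, ← hc, ← hσd]; linarith [hσ2]
  have hsqrt : Real.sqrt ((2*c+1)*(2*c-3)) = 2*s := by
    rw [show (2*c+1)*(2*c-3) = 2^2*(x^2-1) by rw [hxd]; ring, Real.sqrt_mul (by norm_num),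
      Real.sqrt_sq (by norm_num : (0:ℝ) ≤ 2), hsd]
  rw [hbase, h4u, hsqrt]
  have hbase2 : (1-A)*(x+s)/(1-B) = 2*c^2 - 1 - c - 1 + σ*(2*s) := by
    have hs2c : s^2 = (c-1/2)^2 - 1 := by rw [← hxd]; exact hs2
    rw [div_eq_iff (by linarith : (1:ℝ)-B ≠ 0), hA, hB, ha, hxd]
    linear_combination (c - σ + 2*c*σ - 2*σ^2) * hs2c + (-2*s*c + s - 2*c^2 + 2*c + 3/2) * hσ2
  rw [hbase2]
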